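/- Let d ≥ 2 and γ ∈ (0,1). There exists a constant ω₀ ≥ 0, depending only on d and γ, with the following property: for every open set Ω ⊆ ℝ^d, every ϱ ∈ ℝ, every φ ∈ C_c^∞(ℝ^d; ℝ) with ‖∂_jφ‖_∞ ≤ 1 for j = 1,…,d, and every continuously differentiable u : Ω → ℂ^d such that u ∈ L²(Ω;ℂ^d), D_-(u) ∈ L²(Ω;ℂ^{d×d}) and div u ∈ L²(Ω), the quantities a(u,u) := (1/2)∫_Ω |D_-(u)|² dx + ∫_Ω |div u|² dx and a_{ϱφ}(u,u) := (1/2)∫_Ω D_-(e^{ϱφ}u) : \overline{D_-(e^{−ϱφ}u)} dx + ∫_Ω div(e^{ϱφ}u)·\overline{div(e^{−ϱφ}u)} dx are given by absolutely convergent integrals and satisfy |a_{ϱφ}(u,u) − a(u,u)| ≤ γ·a(u,u) + ω₀·ϱ²·‖u‖_{L²(Ω)}². -/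

import Mathlib

/-!
STATEMENT 11: Davies' twisting estimate: for `d ≥ 2` and `γ ∈ (0,1)` there is `ω₀ ≥ 0`
(depending only on `d, γ`) such that for all open `Ω ⊆ ℝ^d`, `ϱ ∈ ℝ`, `φ ∈ C_c^∞(ℝ^d;ℝ)`
with `‖∂_jφ‖_∞ ≤ 1`, and all `C¹` fields `u` with `u, D_-(u), div u ∈ L²(Ω)`, the plain
and twisted form values `a(u,u)`, `a_{ϱφ}(u,u)` are given by absolutely convergent
integrals and `|a_{ϱφ}(u,u) − a(u,u)| ≤ γ·a(u,u) + ω₀·ϱ²·‖u‖_{L²(Ω)}²`.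
-/

open MeasureTheory Complex Filter Topology
open scoped BigOperators ComplexConjugate

noncomputable section

/-- The domain `ℝ^d`. -/
abbrev Edom (d : ℕ) := EuclideanSpace ℝ (Fin d)

/-- The `j`-th partial derivative of a scalar function. -/
def pd {d : ℕ} (j : Fin d) (f : Edom d → ℂ) (x : Edom d) : ℂ :=
  fderiv ℝ f x (EuclideanSpace.single j 1)

/-- The matrix `D_-(u)` with entries `(D_-(u))_{jk} = ∂_j u_k − ∂_k u_j`. -/
def Dm {d : ℕ} (u : Edom d → Fin d → ℂ) (j k : Fin d) (x : Edom d) : ℂ :=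
  pd j (fun y => u y k) x - pd k (fun y => u y j) x

/-- The divergence `div u = ∑_j ∂_j u_j`. -/
def divg {d : ℕ} (u : Edom d → Fin d → ℂ) (x : Edom d) : ℂ :=
  ∑ j, pd j (fun y => u y j) x

/-- The componentwise Laplacian `(Δu)_k = ∑_j ∂_j ∂_j u_k`. -/
def vLap {d : ℕ} (u : Edom d → Fin d → ℂ) (k : Fin d) (x : Edom d) : ℂ :=
  ∑ j, pd j (fun y => pd j (fun z => u z k) y) x

/-- The twisted field `e^{ϱφ} u`. -/
def tw {d : ℕ} (ϱ : ℝ) (φ : Edom d → ℝ) (u : Edom d → Fin d → ℂ) :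
    Edom d → Fin d → ℂ :=
  fun x j => (Real.exp (ϱ * φ x) : ℂ) * u x j

/-- partial derivative of `φ` -/
def gp {d : ℕ} (φ : Edom d → ℝ) (j : Fin d) (x : Edom d) : ℝ :=
  fderiv ℝ φ x (EuclideanSpace.single j 1)

def Bm {d : ℕ} (φ : Edom d → ℝ) (u : Edom d → Fin d → ℂ) (j k : Fin d) (x : Edom d) : ℂ :=
  (gp φ j x : ℂ) * u x k - (gp φ k x : ℂ) * u x j

def cdiv {d : ℕ} (φ : Edom d → ℝ) (u : Edom d → Fin d → ℂ) (x : Edom d) : ℂ :=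
  ∑ j, (gp φ j x : ℂ) * u x j

lemma aux_diffAt {d : ℕ} {Ω : Set (Edom d)} (hΩ : IsOpen Ω)
    {u : Edom d → Fin d → ℂ} (hu : ContDiffOn ℝ 1 u Ω)
    {x : Edom d} (hx : x ∈ Ω) (k : Fin d) :
    DifferentiableAt ℝ (fun y => u y k) x := by
  have h1 : DifferentiableAt ℝ u x :=
    ((hu.contDiffAt (hΩ.mem_nhds hx)).differentiableAt one_ne_zero)
  exact ((ContinuousLinearMap.proj (R := ℝ) (φ := fun _ : Fin d => ℂ) k).differentiableAt).comp x h1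

lemma aux_pd_tw {d : ℕ} {Ω : Set (Edom d)} (hΩ : IsOpen Ω) (ϱ : ℝ) {φ : Edom d → ℝ}
    (hφ : ContDiff ℝ (⊤ : ℕ∞) φ) {u : Edom d → Fin d → ℂ} (hu : ContDiffOn ℝ 1 u Ω)
    {x : Edom d} (hx : x ∈ Ω) (j k : Fin d) :
    pd j (fun y => tw ϱ φ u y k) x
      = (Real.exp (ϱ * φ x) : ℂ) *
          (pd j (fun y => u y k) x + ((ϱ * gp φ j x : ℝ) : ℂ) * u x k) := by
  have hφd : HasFDerivAt φ (fderiv ℝ φ x) x :=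
    (hφ.differentiable (by simp)).differentiableAt.hasFDerivAt
  have h2 : HasFDerivAt (fun y => ϱ * φ y) (ϱ • fderiv ℝ φ x) x := hφd.const_mul ϱ
  have h3 : HasFDerivAt (fun y => Real.exp (ϱ * φ y))
      (Real.exp (ϱ * φ x) • (ϱ • fderiv ℝ φ x)) x := h2.exp
  have h4 : HasFDerivAt (fun y => ((Real.exp (ϱ * φ y) : ℝ) : ℂ))
      (Complex.ofRealCLM.comp (Real.exp (ϱ * φ x) • (ϱ • fderiv ℝ φ x))) x :=
    Complex.ofRealCLM.hasFDerivAt.comp x h3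
  have huk' : HasFDerivAt (fun y => u y k) (fderiv ℝ (fun y => u y k) x) x :=
    (aux_diffAt hΩ hu hx k).hasFDerivAt
  have hprod := h4.mul huk'
  have heq : pd j (fun y => tw ϱ φ u y k) x
      = ((↑(Real.exp (ϱ * φ x)) : ℂ) • fderiv ℝ (fun y => u y k) x +
          u x k • Complex.ofRealCLM.comp (Real.exp (ϱ * φ x) • ϱ • fderiv ℝ φ x))
        (EuclideanSpace.single j 1) := by
    unfold pd tw
    exact congrArg (fun L => L (EuclideanSpace.single j 1)) hprod.fderiv
  rw [heq]
  simp only [ContinuousLinearMap.add_apply, ContinuousLinearMap.smul_apply,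
    ContinuousLinearMap.coe_comp', Function.comp_apply, Complex.ofRealCLM_apply,
    smul_eq_mul, pd, gp]
  push_cast
  ring

lemma aux_Dm_tw {d : ℕ} {Ω : Set (Edom d)} (hΩ : IsOpen Ω) (ϱ : ℝ) {φ : Edom d → ℝ}
    (hφ : ContDiff ℝ (⊤ : ℕ∞) φ) {u : Edom d → Fin d → ℂ} (hu : ContDiffOn ℝ 1 u Ω)
    {x : Edom d} (hx : x ∈ Ω) (j k : Fin d) :
    Dm (tw ϱ φ u) j k x
      = (Real.exp (ϱ * φ x) : ℂ) * (Dm u j k x + (ϱ : ℂ) * Bm φ u j k x) := by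
  unfold Dm Bm
  rw [aux_pd_tw hΩ ϱ hφ hu hx j k, aux_pd_tw hΩ ϱ hφ hu hx k j]
  push_cast
  ring

lemma aux_divg_tw {d : ℕ} {Ω : Set (Edom d)} (hΩ : IsOpen Ω) (ϱ : ℝ) {φ : Edom d → ℝ}
    (hφ : ContDiff ℝ (⊤ : ℕ∞) φ) {u : Edom d → Fin d → ℂ} (hu : ContDiffOn ℝ 1 u Ω)
    {x : Edom d} (hx : x ∈ Ω) :
    divg (tw ϱ φ u) x
      = (Real.exp (ϱ * φ x) : ℂ) * (divg u x + (ϱ : ℂ) * cdiv φ u x) := by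
  unfold divg cdiv
  calc (∑ j, pd j (fun y => tw ϱ φ u y j) x)
      = ∑ j, (Real.exp (ϱ * φ x) : ℂ) *
          (pd j (fun y => u y j) x + (ϱ : ℂ) * ((gp φ j x : ℂ) * u x j)) := by
        refine Finset.sum_congr rfl fun j _ => ?_
        rw [aux_pd_tw hΩ ϱ hφ hu hx j j]; push_cast; ring
    _ = (Real.exp (ϱ * φ x) : ℂ) *
          ((∑ j, pd j (fun y => u y j) x) + (ϱ : ℂ) * ∑ j, (gp φ j x : ℂ) * u x j) := by
        simp only [mul_add, Finset.mul_sum, ← Finset.sum_add_distrib]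

lemma aux_entry_prod (r₁ r₂ ϱ : ℝ) (A B : ℂ) (h : r₁ * r₂ = 1) :
    ((r₁:ℂ) * (A + ↑ϱ * B)) * conj ((r₂:ℂ) * (A + ↑(-ϱ) * B))
      = ↑(Complex.normSq A) + ↑ϱ * (B * conj A - A * conj B)
        - ↑(ϱ^2) * ↑(Complex.normSq B) := by
  have h1 : (r₁ : ℂ) * r₂ = 1 := by exact_mod_cast congrArg (Complex.ofReal) h
  have hA := Complex.mul_conj A
  have hB := Complex.mul_conj B
  simp only [map_mul, map_add, Complex.conj_ofReal]
  push_cast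
  linear_combination (conj A - (ϱ:ℂ) * conj B) * (A + (ϱ:ℂ)*B) * h1 + hA - (ϱ:ℂ)^2 * hB

lemma aux_exp_prod (t : ℝ) : Real.exp t * Real.exp (-t) = 1 := by
  rw [← Real.exp_add]; simp

lemma aux_P_eq {d : ℕ} {Ω : Set (Edom d)} (hΩ : IsOpen Ω) (ϱ : ℝ) {φ : Edom d → ℝ}
    (hφ : ContDiff ℝ (⊤ : ℕ∞) φ) {u : Edom d → Fin d → ℂ} (hu : ContDiffOn ℝ 1 u Ω)
    {x : Edom d} (hx : x ∈ Ω) :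
    (∑ j, ∑ k, Dm (tw ϱ φ u) j k x * conj (Dm (tw (-ϱ) φ u) j k x))
      = ((∑ j, ∑ k, Complex.normSq (Dm u j k x) : ℝ) : ℂ)
        + (ϱ : ℂ) * (∑ j, ∑ k, (Bm φ u j k x * conj (Dm u j k x)
            - Dm u j k x * conj (Bm φ u j k x)))
        - ((ϱ^2 : ℝ) : ℂ) * ((∑ j, ∑ k, Complex.normSq (Bm φ u j k x) : ℝ) : ℂ) := by
  have step : ∀ j k : Fin d,
      Dm (tw ϱ φ u) j k x * conj (Dm (tw (-ϱ) φ u) j k x)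
        = ((Complex.normSq (Dm u j k x) : ℝ) : ℂ)
          + (ϱ : ℂ) * (Bm φ u j k x * conj (Dm u j k x)
              - Dm u j k x * conj (Bm φ u j k x))
          - ((ϱ^2 : ℝ) : ℂ) * ((Complex.normSq (Bm φ u j k x) : ℝ) : ℂ) := by
    intro j k
    rw [aux_Dm_tw hΩ ϱ hφ hu hx j k, aux_Dm_tw hΩ (-ϱ) hφ hu hx j k]
    have h1 : Real.exp (ϱ * φ x) * Real.exp (-ϱ * φ x) = 1 := by
      rw [show -ϱ * φ x = -(ϱ * φ x) by ring]; exact aux_exp_prod _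
    exact aux_entry_prod _ _ ϱ _ _ h1
  calc (∑ j, ∑ k, Dm (tw ϱ φ u) j k x * conj (Dm (tw (-ϱ) φ u) j k x))
      = ∑ j, ∑ k, (((Complex.normSq (Dm u j k x) : ℝ) : ℂ)
          + (ϱ : ℂ) * (Bm φ u j k x * conj (Dm u j k x)
              - Dm u j k x * conj (Bm φ u j k x))
          - ((ϱ^2 : ℝ) : ℂ) * ((Complex.normSq (Bm φ u j k x) : ℝ) : ℂ)) :=
        Finset.sum_congr rfl fun j _ => Finset.sum_congr rfl fun k _ => step j k
    _ = _ := by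
        push_cast
        simp only [Finset.sum_add_distrib, Finset.sum_sub_distrib, ← Finset.mul_sum]

lemma aux_Q_eq {d : ℕ} {Ω : Set (Edom d)} (hΩ : IsOpen Ω) (ϱ : ℝ) {φ : Edom d → ℝ}
    (hφ : ContDiff ℝ (⊤ : ℕ∞) φ) {u : Edom d → Fin d → ℂ} (hu : ContDiffOn ℝ 1 u Ω)
    {x : Edom d} (hx : x ∈ Ω) :
    divg (tw ϱ φ u) x * conj (divg (tw (-ϱ) φ u) x)
      = ((Complex.normSq (divg u x) : ℝ) : ℂ)
        + (ϱ : ℂ) * (cdiv φ u x * conj (divg u x) - divg u x * conj (cdiv φ u x))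
        - ((ϱ^2 : ℝ) : ℂ) * ((Complex.normSq (cdiv φ u x) : ℝ) : ℂ) := by
  rw [aux_divg_tw hΩ ϱ hφ hu hx, aux_divg_tw hΩ (-ϱ) hφ hu hx]
  have h1 : Real.exp (ϱ * φ x) * Real.exp (-ϱ * φ x) = 1 := by
    rw [show -ϱ * φ x = -(ϱ * φ x) by ring]; exact aux_exp_prod _
  exact aux_entry_prod _ _ ϱ _ _ h1

lemma aux_contOn_u {d : ℕ} {Ω : Set (Edom d)} {u : Edom d → Fin d → ℂ}
    (hu : ContDiffOn ℝ 1 u Ω) (k : Fin d) :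
    ContinuousOn (fun x => u x k) Ω :=
  (continuous_apply k).comp_continuousOn hu.continuousOn

lemma aux_contOn_pd {d : ℕ} {Ω : Set (Edom d)} (hΩ : IsOpen Ω) {u : Edom d → Fin d → ℂ}
    (hu : ContDiffOn ℝ 1 u Ω) (j k : Fin d) :
    ContinuousOn (fun x => pd j (fun y => u y k) x) Ω := by
  have h1 : ContDiffOn ℝ 1 (fun y => u y k) Ω :=
    (ContinuousLinearMap.proj (R := ℝ) (φ := fun _ : Fin d => ℂ) k).contDiff.comp_contDiffOn hu
  have h2 := h1.continuousOn_fderiv_of_isOpen hΩ le_rfl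
  exact h2.clm_apply continuousOn_const

lemma aux_cont_gp {d : ℕ} {φ : Edom d → ℝ} (hφ : ContDiff ℝ (⊤ : ℕ∞) φ) (j : Fin d) :
    Continuous (gp φ j) := by
  have h1 : Continuous (fderiv ℝ φ) := hφ.continuous_fderiv (by simp)
  exact h1.clm_apply continuous_const

lemma aux_contOn_Dm {d : ℕ} {Ω : Set (Edom d)} (hΩ : IsOpen Ω) {u : Edom d → Fin d → ℂ}
    (hu : ContDiffOn ℝ 1 u Ω) (j k : Fin d) :
    ContinuousOn (fun x => Dm u j k x) Ω :=
  (aux_contOn_pd hΩ hu j k).sub (aux_contOn_pd hΩ hu k j)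

lemma aux_contOn_Bm {d : ℕ} {Ω : Set (Edom d)} {φ : Edom d → ℝ}
    (hφ : ContDiff ℝ (⊤ : ℕ∞) φ) {u : Edom d → Fin d → ℂ}
    (hu : ContDiffOn ℝ 1 u Ω) (j k : Fin d) :
    ContinuousOn (fun x => Bm φ u j k x) Ω := by
  unfold Bm
  exact (((Complex.continuous_ofReal.comp (aux_cont_gp hφ j)).continuousOn.mul
    (aux_contOn_u hu k))).sub
    (((Complex.continuous_ofReal.comp (aux_cont_gp hφ k)).continuousOn.mul
    (aux_contOn_u hu j)))

lemma aux_contOn_divg {d : ℕ} {Ω : Set (Edom d)} (hΩ : IsOpen Ω) {u : Edom d → Fin d → ℂ}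
    (hu : ContDiffOn ℝ 1 u Ω) :
    ContinuousOn (fun x => divg u x) Ω := by
  unfold divg
  exact continuousOn_finset_sum _ fun j _ => aux_contOn_pd hΩ hu j j

lemma aux_contOn_cdiv {d : ℕ} {Ω : Set (Edom d)} {φ : Edom d → ℝ}
    (hφ : ContDiff ℝ (⊤ : ℕ∞) φ) {u : Edom d → Fin d → ℂ}
    (hu : ContDiffOn ℝ 1 u Ω) :
    ContinuousOn (fun x => cdiv φ u x) Ω := by
  unfold cdiv
  exact continuousOn_finset_sum _ fun j _ =>
    (Complex.continuous_ofReal.comp (aux_cont_gp hφ j)).continuousOn.mul (aux_contOn_u hu j)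

lemma aux_normSq_norm (z : ℂ) : Complex.normSq z = ‖z‖^2 := by
  rw [Complex.normSq_eq_norm_sq]

lemma aux_nB_le {d : ℕ} (φ : Edom d → ℝ) (u : Edom d → Fin d → ℂ)
    (hg : ∀ j x, |gp φ j x| ≤ 1) (x : Edom d) :
    (∑ j, ∑ k, Complex.normSq (Bm φ u j k x)) ≤ 4 * d * ∑ j, Complex.normSq (u x j) := by
  have hjk : ∀ j k : Fin d, Complex.normSq (Bm φ u j k x)
      ≤ 2 * Complex.normSq (u x k) + 2 * Complex.normSq (u x j) := by
    intro j k
    have hm : ∀ (i i' : Fin d), ‖(gp φ i x : ℂ) * u x i'‖ ≤ ‖u x i'‖ := by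
      intro i i'
      rw [norm_mul, Complex.norm_real, Real.norm_eq_abs]
      exact mul_le_of_le_one_left (norm_nonneg _) (hg i x)
    have h1 : ‖Bm φ u j k x‖ ≤ ‖u x k‖ + ‖u x j‖ :=
      (norm_sub_le _ _).trans (add_le_add (hm j k) (hm k j))
    rw [aux_normSq_norm, aux_normSq_norm, aux_normSq_norm]
    nlinarith [norm_nonneg (Bm φ u j k x), norm_nonneg (u x k), norm_nonneg (u x j),
      sq_nonneg (‖u x k‖ - ‖u x j‖)]
  calc (∑ j, ∑ k, Complex.normSq (Bm φ u j k x))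
      ≤ ∑ j : Fin d, ∑ k : Fin d,
          (2 * Complex.normSq (u x k) + 2 * Complex.normSq (u x j)) :=
        Finset.sum_le_sum fun j _ => Finset.sum_le_sum fun k _ => hjk j k
    _ = 4 * d * ∑ j, Complex.normSq (u x j) := by
        simp [Finset.sum_add_distrib, Finset.mul_sum, Finset.sum_const, Finset.card_univ,
          Finset.card_fin]
        rw [← Finset.sum_add_distrib]
        exact Finset.sum_congr rfl fun j _ => by ring

lemma aux_nc_le {d : ℕ} (φ : Edom d → ℝ) (u : Edom d → Fin d → ℂ)
    (hg : ∀ j x, |gp φ j x| ≤ 1) (x : Edom d) :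
    Complex.normSq (cdiv φ u x) ≤ d * ∑ j, Complex.normSq (u x j) := by
  have h1 : ‖cdiv φ u x‖ ≤ ∑ j, ‖u x j‖ := by
    refine (norm_sum_le _ _).trans (Finset.sum_le_sum fun j _ => ?_)
    rw [norm_mul, Complex.norm_real, Real.norm_eq_abs]
    exact mul_le_of_le_one_left (norm_nonneg _) (hg j x)
  have h2 : (∑ j, ‖u x j‖)^2 ≤ (d : ℝ) * ∑ j, ‖u x j‖^2 := by
    simpa [Finset.card_fin] using
      sq_sum_le_card_mul_sum_sq (s := (Finset.univ : Finset (Fin d))) (f := fun j => ‖u x j‖)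
  have h3 : Complex.normSq (cdiv φ u x) = ‖cdiv φ u x‖^2 := aux_normSq_norm _
  have h4 : ∀ j, Complex.normSq (u x j) = ‖u x j‖^2 := fun j => aux_normSq_norm _
  rw [h3]
  simp only [h4]
  nlinarith [norm_nonneg (cdiv φ u x), Finset.sum_nonneg fun j (_ : j ∈ Finset.univ) => norm_nonneg (u x j)]

lemma aux_cross_norm (A B : ℂ) : ‖B * conj A - A * conj B‖ ≤ 2 * (‖A‖ * ‖B‖) := by
  refine (norm_sub_le _ _).trans ?_
  rw [norm_mul, norm_mul, RCLike.norm_conj, RCLike.norm_conj]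
  ring_nf
  nlinarith [norm_nonneg A, norm_nonneg B]

lemma aux_cross_bd {γ : ℝ} (hγ : 0 < γ) (ϱ : ℝ) (A B : ℂ) :
    |ϱ| * ‖B * conj A - A * conj B‖
      ≤ γ * Complex.normSq A + (ϱ^2/γ) * Complex.normSq B := by
  have h1 := aux_cross_norm A B
  have h2 : |ϱ| * ‖B * conj A - A * conj B‖ ≤ |ϱ| * (2 * (‖A‖ * ‖B‖)) :=
    mul_le_mul_of_nonneg_left h1 (abs_nonneg ϱ)
  have h3 : γ * (ϱ^2/γ) = ϱ^2 := by field_simp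
  rw [aux_normSq_norm, aux_normSq_norm]
  nlinarith [sq_nonneg (γ * ‖A‖ - |ϱ| * ‖B‖), _root_.sq_abs ϱ, hγ, abs_nonneg ϱ,
    norm_nonneg A, norm_nonneg B]

lemma aux_cross_simple (A B : ℂ) :
    ‖B * conj A - A * conj B‖ ≤ Complex.normSq A + Complex.normSq B := by
  have h1 := aux_cross_norm A B
  rw [aux_normSq_norm, aux_normSq_norm]
  nlinarith [sq_nonneg (‖A‖ - ‖B‖)]

lemma aux_EA_simple {d : ℕ} (φ : Edom d → ℝ) (u : Edom d → Fin d → ℂ) (x : Edom d) :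
    ‖∑ j, ∑ k, (Bm φ u j k x * conj (Dm u j k x) - Dm u j k x * conj (Bm φ u j k x))‖
      ≤ (∑ j, ∑ k, Complex.normSq (Dm u j k x))
        + (∑ j, ∑ k, Complex.normSq (Bm φ u j k x)) := by
  calc ‖∑ j, ∑ k, (Bm φ u j k x * conj (Dm u j k x) - Dm u j k x * conj (Bm φ u j k x))‖
      ≤ ∑ j, ∑ k, ‖Bm φ u j k x * conj (Dm u j k x) - Dm u j k x * conj (Bm φ u j k x)‖ :=
        (norm_sum_le _ _).trans (Finset.sum_le_sum fun j _ => norm_sum_le _ _)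
    _ ≤ ∑ j : Fin d, ∑ k : Fin d,
          (Complex.normSq (Dm u j k x) + Complex.normSq (Bm φ u j k x)) :=
        Finset.sum_le_sum fun j _ => Finset.sum_le_sum fun k _ =>
          aux_cross_simple (Dm u j k x) (Bm φ u j k x)
    _ = _ := by simp [Finset.sum_add_distrib]

lemma aux_EA_bd {d : ℕ} {γ : ℝ} (hγ : 0 < γ) (ϱ : ℝ) (φ : Edom d → ℝ)
    (u : Edom d → Fin d → ℂ) (x : Edom d) :
    |ϱ| * ‖∑ j, ∑ k, (Bm φ u j k x * conj (Dm u j k x) - Dm u j k x * conj (Bm φ u j k x))‖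
      ≤ γ * (∑ j, ∑ k, Complex.normSq (Dm u j k x))
        + (ϱ^2/γ) * (∑ j, ∑ k, Complex.normSq (Bm φ u j k x)) := by
  calc |ϱ| * ‖∑ j, ∑ k, (Bm φ u j k x * conj (Dm u j k x) - Dm u j k x * conj (Bm φ u j k x))‖
      ≤ |ϱ| * ∑ j, ∑ k, ‖Bm φ u j k x * conj (Dm u j k x) - Dm u j k x * conj (Bm φ u j k x)‖ :=
        mul_le_mul_of_nonneg_left
          ((norm_sum_le _ _).trans (Finset.sum_le_sum fun j _ => norm_sum_le _ _))
          (abs_nonneg ϱ)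
    _ = ∑ j : Fin d, ∑ k : Fin d,
          |ϱ| * ‖Bm φ u j k x * conj (Dm u j k x) - Dm u j k x * conj (Bm φ u j k x)‖ := by
        simp [Finset.mul_sum]
    _ ≤ ∑ j : Fin d, ∑ k : Fin d,
          (γ * Complex.normSq (Dm u j k x) + (ϱ^2/γ) * Complex.normSq (Bm φ u j k x)) :=
        Finset.sum_le_sum fun j _ => Finset.sum_le_sum fun k _ =>
          aux_cross_bd hγ ϱ (Dm u j k x) (Bm φ u j k x)
    _ = _ := by simp [Finset.sum_add_distrib, Finset.mul_sum]

theorem davies_twisted_form_estimate (d : ℕ) (hd : 2 ≤ d)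
    (γ : ℝ) (hγ0 : 0 < γ) (hγ1 : γ < 1) :
    ∃ ω₀ : ℝ, 0 ≤ ω₀ ∧
      ∀ (Ω : Set (Edom d)), IsOpen Ω →
      ∀ (ϱ : ℝ) (φ : Edom d → ℝ), ContDiff ℝ (⊤ : ℕ∞) φ → HasCompactSupport φ →
        (∀ j : Fin d, ∀ x : Edom d, |fderiv ℝ φ x (EuclideanSpace.single j 1)| ≤ 1) →
      ∀ u : Edom d → Fin d → ℂ, ContDiffOn ℝ 1 u Ω →
        Integrable (fun x => ∑ j, Complex.normSq (u x j)) (volume.restrict Ω) →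
        Integrable (fun x => ∑ j, ∑ k, Complex.normSq (Dm u j k x)) (volume.restrict Ω) →
        Integrable (fun x => Complex.normSq (divg u x)) (volume.restrict Ω) →
        -- the twisted form is given by absolutely convergent integrals:
        Integrable (fun x => ∑ j, ∑ k,
            Dm (tw ϱ φ u) j k x * conj (Dm (tw (-ϱ) φ u) j k x)) (volume.restrict Ω)
        ∧ Integrable (fun x =>
            divg (tw ϱ φ u) x * conj (divg (tw (-ϱ) φ u) x)) (volume.restrict Ω)
        -- and |a_{ϱφ}(u,u) − a(u,u)| ≤ γ a(u,u) + ω₀ ϱ² ‖u‖₂²: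
        ∧ norm
            (((1 / 2 : ℂ) * ∫ x, ∑ j, ∑ k,
                Dm (tw ϱ φ u) j k x * conj (Dm (tw (-ϱ) φ u) j k x) ∂(volume.restrict Ω)
              + ∫ x, divg (tw ϱ φ u) x * conj (divg (tw (-ϱ) φ u) x) ∂(volume.restrict Ω))
            - ((((1 / 2 : ℝ) * ∫ x, ∑ j, ∑ k,
                  Complex.normSq (Dm u j k x) ∂(volume.restrict Ω)
                + ∫ x, Complex.normSq (divg u x) ∂(volume.restrict Ω) : ℝ)) : ℂ))
          ≤ γ * ((1 / 2 : ℝ) * (∫ x, ∑ j, ∑ k,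
                  Complex.normSq (Dm u j k x) ∂(volume.restrict Ω))
                + ∫ x, Complex.normSq (divg u x) ∂(volume.restrict Ω))
            + ω₀ * ϱ ^ 2 * ∫ x, ∑ j, Complex.normSq (u x j) ∂(volume.restrict Ω) := by
  have hγinv : 0 < 1/γ := one_div_pos.2 hγ0
  refine ⟨3 * d * (1 + 1/γ), by positivity, ?_⟩
  intro Ω hΩ ϱ φ hφ hφc hφg u hu hu2 hA2 hdiv2
  have hΩm : MeasurableSet Ω := hΩ.measurableSet
  have hg : ∀ (j : Fin d) (x : Edom d), |gp φ j x| ≤ 1 := fun j x => hφg j x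
  -- measurability
  have hnB_meas : AEStronglyMeasurable
      (fun x => ∑ j, ∑ k, Complex.normSq (Bm φ u j k x)) (volume.restrict Ω) := by
    refine ContinuousOn.aestronglyMeasurable ?_ hΩm
    refine continuousOn_finset_sum _ fun j _ => continuousOn_finset_sum _ fun k _ => ?_
    exact Complex.continuous_normSq.comp_continuousOn (aux_contOn_Bm hφ hu j k)
  have hnc_meas : AEStronglyMeasurable
      (fun x => Complex.normSq (cdiv φ u x)) (volume.restrict Ω) := by
    refine ContinuousOn.aestronglyMeasurable ?_ hΩm
    exact Complex.continuous_normSq.comp_continuousOn (aux_contOn_cdiv hφ hu)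
  have hEA_meas : AEStronglyMeasurable
      (fun x => ∑ j, ∑ k, (Bm φ u j k x * conj (Dm u j k x)
          - Dm u j k x * conj (Bm φ u j k x))) (volume.restrict Ω) := by
    refine ContinuousOn.aestronglyMeasurable ?_ hΩm
    refine continuousOn_finset_sum _ fun j _ => continuousOn_finset_sum _ fun k _ => ?_
    exact ((aux_contOn_Bm hφ hu j k).mul
        (continuous_star.comp_continuousOn (aux_contOn_Dm hΩ hu j k))).sub
      ((aux_contOn_Dm hΩ hu j k).mul
        (continuous_star.comp_continuousOn (aux_contOn_Bm hφ hu j k)))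
  have hEc_meas : AEStronglyMeasurable
      (fun x => (cdiv φ u x * conj (divg u x)
          - divg u x * conj (cdiv φ u x))) (volume.restrict Ω) := by
    refine ContinuousOn.aestronglyMeasurable ?_ hΩm
    exact ((aux_contOn_cdiv hφ hu).mul
        (continuous_star.comp_continuousOn (aux_contOn_divg hΩ hu))).sub
      ((aux_contOn_divg hΩ hu).mul
        (continuous_star.comp_continuousOn (aux_contOn_cdiv hφ hu)))
  -- integrability of the auxiliary real quantities
  have hnB_int : Integrable (fun x => ∑ j, ∑ k, Complex.normSq (Bm φ u j k x))
      (volume.restrict Ω) := by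
    refine Integrable.mono' (hu2.const_mul (4 * d)) hnB_meas (ae_of_all _ fun x => ?_)
    rw [Real.norm_eq_abs, _root_.abs_of_nonneg (Finset.sum_nonneg fun j _ =>
      Finset.sum_nonneg fun k _ => Complex.normSq_nonneg _)]
    exact aux_nB_le φ u hg x
  have hnc_int : Integrable (fun x => Complex.normSq (cdiv φ u x)) (volume.restrict Ω) := by
    refine Integrable.mono' (hu2.const_mul d) hnc_meas (ae_of_all _ fun x => ?_)
    rw [Real.norm_eq_abs, _root_.abs_of_nonneg (Complex.normSq_nonneg _)]
    exact aux_nc_le φ u hg x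
  have hEA_int : Integrable (fun x => ∑ j, ∑ k, (Bm φ u j k x * conj (Dm u j k x)
      - Dm u j k x * conj (Bm φ u j k x))) (volume.restrict Ω) := by
    refine Integrable.mono' (hA2.add hnB_int) hEA_meas (ae_of_all _ fun x => ?_)
    exact aux_EA_simple φ u x
  have hEc_int : Integrable (fun x => (cdiv φ u x * conj (divg u x)
      - divg u x * conj (cdiv φ u x))) (volume.restrict Ω) := by
    refine Integrable.mono' (hdiv2.add hnc_int) hEc_meas (ae_of_all _ fun x => ?_)
    exact aux_cross_simple (divg u x) (cdiv φ u x)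
  -- a.e. identities
  have hPae : (fun x => ∑ j, ∑ k, Dm (tw ϱ φ u) j k x * conj (Dm (tw (-ϱ) φ u) j k x))
      =ᵐ[volume.restrict Ω] (fun x =>
        ((∑ j, ∑ k, Complex.normSq (Dm u j k x) : ℝ) : ℂ)
        + (ϱ : ℂ) * (∑ j, ∑ k, (Bm φ u j k x * conj (Dm u j k x)
            - Dm u j k x * conj (Bm φ u j k x)))
        - ((ϱ^2 : ℝ) : ℂ) * ((∑ j, ∑ k, Complex.normSq (Bm φ u j k x) : ℝ) : ℂ)) := by
    rw [Filter.EventuallyEq, ae_restrict_iff' hΩm]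
    exact ae_of_all _ fun x hx => aux_P_eq hΩ ϱ hφ hu hx
  have hQae : (fun x => divg (tw ϱ φ u) x * conj (divg (tw (-ϱ) φ u) x))
      =ᵐ[volume.restrict Ω] (fun x =>
        ((Complex.normSq (divg u x) : ℝ) : ℂ)
        + (ϱ : ℂ) * (cdiv φ u x * conj (divg u x) - divg u x * conj (cdiv φ u x))
        - ((ϱ^2 : ℝ) : ℂ) * ((Complex.normSq (cdiv φ u x) : ℝ) : ℂ)) := by
    rw [Filter.EventuallyEq, ae_restrict_iff' hΩm]
    exact ae_of_all _ fun x hx => aux_Q_eq hΩ ϱ hφ hu hx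
  have hP_int : Integrable (fun x => ∑ j, ∑ k,
      Dm (tw ϱ φ u) j k x * conj (Dm (tw (-ϱ) φ u) j k x)) (volume.restrict Ω) := by
    refine Integrable.congr ?_ hPae.symm
    exact ((hA2.ofReal.add (hEA_int.const_mul _)).sub (hnB_int.ofReal.const_mul _))
  have hQ_int : Integrable (fun x =>
      divg (tw ϱ φ u) x * conj (divg (tw (-ϱ) φ u) x)) (volume.restrict Ω) := by
    refine Integrable.congr ?_ hQae.symm
    exact ((hdiv2.ofReal.add (hEc_int.const_mul _)).sub (hnc_int.ofReal.const_mul _))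
  refine ⟨hP_int, hQ_int, ?_⟩
  -- integral values
  have hP_val : (∫ x, ∑ j, ∑ k,
        Dm (tw ϱ φ u) j k x * conj (Dm (tw (-ϱ) φ u) j k x) ∂(volume.restrict Ω))
      = ((∫ x, ∑ j, ∑ k, Complex.normSq (Dm u j k x) ∂(volume.restrict Ω) : ℝ) : ℂ)
        + (ϱ : ℂ) * (∫ x, ∑ j, ∑ k, (Bm φ u j k x * conj (Dm u j k x)
            - Dm u j k x * conj (Bm φ u j k x)) ∂(volume.restrict Ω))
        - ((ϱ^2 : ℝ) : ℂ) *
          ((∫ x, ∑ j, ∑ k, Complex.normSq (Bm φ u j k x) ∂(volume.restrict Ω) : ℝ) : ℂ) := by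
    have h1 : Integrable (fun x => ((∑ j, ∑ k, Complex.normSq (Dm u j k x) : ℝ) : ℂ)
        + (ϱ : ℂ) * ∑ j, ∑ k, (Bm φ u j k x * conj (Dm u j k x)
            - Dm u j k x * conj (Bm φ u j k x))) (volume.restrict Ω) :=
      hA2.ofReal.add (hEA_int.const_mul _)
    have h2' : Integrable (fun x => ((ϱ^2 : ℝ) : ℂ) *
        ((∑ j, ∑ k, Complex.normSq (Bm φ u j k x) : ℝ) : ℂ)) (volume.restrict Ω) :=
      hnB_int.ofReal.const_mul _
    have eA : (∫ x, ((∑ j, ∑ k, Complex.normSq (Dm u j k x) : ℝ) : ℂ) ∂(volume.restrict Ω))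
        = ((∫ x, ∑ j, ∑ k, Complex.normSq (Dm u j k x) ∂(volume.restrict Ω) : ℝ) : ℂ) :=
      integral_ofReal
    have eB : (∫ x, (ϱ : ℂ) * (∑ j, ∑ k, (Bm φ u j k x * conj (Dm u j k x)
          - Dm u j k x * conj (Bm φ u j k x))) ∂(volume.restrict Ω))
        = (ϱ : ℂ) * ∫ x, (∑ j, ∑ k, (Bm φ u j k x * conj (Dm u j k x)
          - Dm u j k x * conj (Bm φ u j k x))) ∂(volume.restrict Ω) :=
      integral_const_mul _ _
    have eC : (∫ x, ((ϱ^2 : ℝ) : ℂ) *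
          ((∑ j, ∑ k, Complex.normSq (Bm φ u j k x) : ℝ) : ℂ) ∂(volume.restrict Ω))
        = ((ϱ^2 : ℝ) : ℂ) *
          ((∫ x, ∑ j, ∑ k, Complex.normSq (Bm φ u j k x) ∂(volume.restrict Ω) : ℝ) : ℂ) :=
      (integral_const_mul _ _).trans (congrArg (fun t => (((ϱ^2 : ℝ) : ℂ)) * t) integral_ofReal)
    refine (integral_congr_ae hPae).trans ?_
    refine (integral_sub h1 h2').trans ?_
    exact congrArg₂ (· - ·)
      ((integral_add hA2.ofReal (hEA_int.const_mul ((ϱ : ℂ)))).trans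
        (congrArg₂ (· + ·) eA eB)) eC
  have hQ_val : (∫ x, divg (tw ϱ φ u) x * conj (divg (tw (-ϱ) φ u) x) ∂(volume.restrict Ω))
      = ((∫ x, Complex.normSq (divg u x) ∂(volume.restrict Ω) : ℝ) : ℂ)
        + (ϱ : ℂ) * (∫ x, (cdiv φ u x * conj (divg u x)
            - divg u x * conj (cdiv φ u x)) ∂(volume.restrict Ω))
        - ((ϱ^2 : ℝ) : ℂ) *
          ((∫ x, Complex.normSq (cdiv φ u x) ∂(volume.restrict Ω) : ℝ) : ℂ) := by
    have h1 : Integrable (fun x => ((Complex.normSq (divg u x) : ℝ) : ℂ)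
        + (ϱ : ℂ) * (cdiv φ u x * conj (divg u x)
            - divg u x * conj (cdiv φ u x))) (volume.restrict Ω) :=
      hdiv2.ofReal.add (hEc_int.const_mul _)
    have h2' : Integrable (fun x => ((ϱ^2 : ℝ) : ℂ) *
        ((Complex.normSq (cdiv φ u x) : ℝ) : ℂ)) (volume.restrict Ω) :=
      hnc_int.ofReal.const_mul _
    have eA : (∫ x, ((Complex.normSq (divg u x) : ℝ) : ℂ) ∂(volume.restrict Ω))
        = ((∫ x, Complex.normSq (divg u x) ∂(volume.restrict Ω) : ℝ) : ℂ) :=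
      integral_ofReal
    have eB : (∫ x, (ϱ : ℂ) * (cdiv φ u x * conj (divg u x)
          - divg u x * conj (cdiv φ u x)) ∂(volume.restrict Ω))
        = (ϱ : ℂ) * ∫ x, (cdiv φ u x * conj (divg u x)
          - divg u x * conj (cdiv φ u x)) ∂(volume.restrict Ω) :=
      integral_const_mul _ _
    have eC : (∫ x, ((ϱ^2 : ℝ) : ℂ) *
          ((Complex.normSq (cdiv φ u x) : ℝ) : ℂ) ∂(volume.restrict Ω))
        = ((ϱ^2 : ℝ) : ℂ) *
          ((∫ x, Complex.normSq (cdiv φ u x) ∂(volume.restrict Ω) : ℝ) : ℂ) :=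
      (integral_const_mul _ _).trans (congrArg (fun t => (((ϱ^2 : ℝ) : ℂ)) * t) integral_ofReal)
    refine (integral_congr_ae hQae).trans ?_
    refine (integral_sub h1 h2').trans ?_
    exact congrArg₂ (· - ·)
      ((integral_add hdiv2.ofReal (hEc_int.const_mul ((ϱ : ℂ)))).trans
        (congrArg₂ (· + ·) eA eB)) eC
  rw [hP_val, hQ_val]
  -- abbreviations
  set IA := ∫ x, ∑ j, ∑ k, Complex.normSq (Dm u j k x) ∂(volume.restrict Ω) with hIA
  set Idv := ∫ x, Complex.normSq (divg u x) ∂(volume.restrict Ω) with hIdv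
  set Inu := ∫ x, ∑ j, Complex.normSq (u x j) ∂(volume.restrict Ω) with hInu
  set IEA := ∫ x, ∑ j, ∑ k, (Bm φ u j k x * conj (Dm u j k x)
      - Dm u j k x * conj (Bm φ u j k x)) ∂(volume.restrict Ω) with hIEA
  set IEc := ∫ x, (cdiv φ u x * conj (divg u x)
      - divg u x * conj (cdiv φ u x)) ∂(volume.restrict Ω) with hIEc
  set IB := ∫ x, ∑ j, ∑ k, Complex.normSq (Bm φ u j k x) ∂(volume.restrict Ω) with hIB
  set Ic := ∫ x, Complex.normSq (cdiv φ u x) ∂(volume.restrict Ω) with hIc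
  -- nonnegativity
  have hIB0 : 0 ≤ IB := integral_nonneg fun x =>
    Finset.sum_nonneg fun j _ => Finset.sum_nonneg fun k _ => Complex.normSq_nonneg _
  have hIc0 : 0 ≤ Ic := integral_nonneg fun x => Complex.normSq_nonneg _
  have hInu0 : 0 ≤ Inu := integral_nonneg fun x =>
    Finset.sum_nonneg fun j _ => Complex.normSq_nonneg _
  -- the complex expression simplifies
  have hT : ((1 / 2 : ℂ) * (((IA : ℝ) : ℂ)
        + (ϱ : ℂ) * IEA - ((ϱ^2 : ℝ) : ℂ) * ((IB : ℝ) : ℂ))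
      + (((Idv : ℝ) : ℂ) + (ϱ : ℂ) * IEc - ((ϱ^2 : ℝ) : ℂ) * ((Ic : ℝ) : ℂ))
      - ((((1 / 2 : ℝ) * IA + Idv : ℝ)) : ℂ))
      = (1 / 2 : ℂ) * ((ϱ : ℂ) * IEA) + (ϱ : ℂ) * IEc
        - ((1 / 2 : ℂ) * (((ϱ^2 : ℝ) : ℂ) * ((IB : ℝ) : ℂ))
            + ((ϱ^2 : ℝ) : ℂ) * ((Ic : ℝ) : ℂ)) := by
    push_cast
    ring
  rw [hT]
  -- bound the absolute value
  have habs : ‖(1 / 2 : ℂ) * ((ϱ : ℂ) * IEA) + (ϱ : ℂ) * IEc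
        - ((1 / 2 : ℂ) * (((ϱ^2 : ℝ) : ℂ) * ((IB : ℝ) : ℂ))
            + ((ϱ^2 : ℝ) : ℂ) * ((Ic : ℝ) : ℂ))‖
      ≤ (1/2) * (|ϱ| * ‖IEA‖) + |ϱ| * ‖IEc‖ + ((1/2) * (ϱ^2 * IB) + ϱ^2 * Ic) := by
    refine (norm_sub_le _ _).trans ?_
    have h1 : ‖(1 / 2 : ℂ) * ((ϱ : ℂ) * IEA) + (ϱ : ℂ) * IEc‖
        ≤ (1/2) * (|ϱ| * ‖IEA‖) + |ϱ| * ‖IEc‖ := by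
      refine (norm_add_le _ _).trans ?_
      simp [norm_mul, Complex.norm_real, Real.norm_eq_abs]
    have h2 : ‖(1 / 2 : ℂ) * (((ϱ^2 : ℝ) : ℂ) * ((IB : ℝ) : ℂ))
          + ((ϱ^2 : ℝ) : ℂ) * ((Ic : ℝ) : ℂ)‖
        ≤ (1/2) * (ϱ^2 * IB) + ϱ^2 * Ic := by
      refine (norm_add_le _ _).trans ?_
      simp [norm_mul, Complex.norm_real, Real.norm_eq_abs, _root_.abs_of_nonneg hIB0,
        _root_.abs_of_nonneg hIc0, _root_.abs_of_nonneg (sq_nonneg ϱ)]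
    linarith
  refine habs.trans ?_
  -- key estimates
  have hEA_est : |ϱ| * ‖IEA‖ ≤ γ * IA + (ϱ^2/γ) * IB := by
    calc |ϱ| * ‖IEA‖
        ≤ |ϱ| * ∫ x, ‖∑ j, ∑ k, (Bm φ u j k x * conj (Dm u j k x)
            - Dm u j k x * conj (Bm φ u j k x))‖ ∂(volume.restrict Ω) :=
          mul_le_mul_of_nonneg_left (norm_integral_le_integral_norm _) (abs_nonneg ϱ)
      _ = ∫ x, |ϱ| * ‖∑ j, ∑ k, (Bm φ u j k x * conj (Dm u j k x)
            - Dm u j k x * conj (Bm φ u j k x))‖ ∂(volume.restrict Ω) :=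
          (integral_const_mul _ _).symm
      _ ≤ ∫ x, (γ * (∑ j, ∑ k, Complex.normSq (Dm u j k x))
            + (ϱ^2/γ) * (∑ j, ∑ k, Complex.normSq (Bm φ u j k x))) ∂(volume.restrict Ω) := by
          refine integral_mono (hEA_int.norm.const_mul _)
            ((hA2.const_mul γ).add (hnB_int.const_mul _)) fun x => ?_
          exact aux_EA_bd hγ0 ϱ φ u x
      _ = γ * IA + (ϱ^2/γ) * IB := by
          rw [integral_add (hA2.const_mul γ) (hnB_int.const_mul _),
            integral_const_mul, integral_const_mul]
  have hEc_est : |ϱ| * ‖IEc‖ ≤ γ * Idv + (ϱ^2/γ) * Ic := by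
    calc |ϱ| * ‖IEc‖
        ≤ |ϱ| * ∫ x, ‖cdiv φ u x * conj (divg u x)
            - divg u x * conj (cdiv φ u x)‖ ∂(volume.restrict Ω) :=
          mul_le_mul_of_nonneg_left (norm_integral_le_integral_norm _) (abs_nonneg ϱ)
      _ = ∫ x, |ϱ| * ‖cdiv φ u x * conj (divg u x)
            - divg u x * conj (cdiv φ u x)‖ ∂(volume.restrict Ω) :=
          (integral_const_mul _ _).symm
      _ ≤ ∫ x, (γ * Complex.normSq (divg u x)
            + (ϱ^2/γ) * Complex.normSq (cdiv φ u x)) ∂(volume.restrict Ω) := by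
          refine integral_mono (hEc_int.norm.const_mul _)
            ((hdiv2.const_mul γ).add (hnc_int.const_mul _)) fun x => ?_
          exact aux_cross_bd hγ0 ϱ (divg u x) (cdiv φ u x)
      _ = γ * Idv + (ϱ^2/γ) * Ic := by
          rw [integral_add (hdiv2.const_mul γ) (hnc_int.const_mul _),
            integral_const_mul, integral_const_mul]
  have hIB_le : IB ≤ 4 * d * Inu := by
    calc IB ≤ ∫ x, 4 * d * ∑ j, Complex.normSq (u x j) ∂(volume.restrict Ω) :=
          integral_mono hnB_int (hu2.const_mul _) (aux_nB_le φ u hg)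
      _ = 4 * d * Inu := integral_const_mul _ _
  have hIc_le : Ic ≤ d * Inu := by
    calc Ic ≤ ∫ x, d * ∑ j, Complex.normSq (u x j) ∂(volume.restrict Ω) :=
          integral_mono hnc_int (hu2.const_mul _) (aux_nc_le φ u hg)
      _ = d * Inu := integral_const_mul _ _
  -- final arithmetic
  have e1 : (1/2) * (ϱ^2/γ * IB) + ϱ^2/γ * Ic + ((1/2) * (ϱ^2 * IB) + ϱ^2 * Ic)
      = ϱ^2 * ((1/γ + 1) * ((1/2) * IB + Ic)) := by ring
  have e2 : (3 * (d:ℝ) * (1 + 1/γ)) * ϱ^2 * Inu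
      = ϱ^2 * ((1/γ + 1) * (3 * d * Inu)) := by ring
  have h5 : ϱ^2 * ((1/γ + 1) * ((1/2) * IB + Ic)) ≤ ϱ^2 * ((1/γ + 1) * (3 * d * Inu)) := by
    refine mul_le_mul_of_nonneg_left (mul_le_mul_of_nonneg_left ?_ (by positivity)) (sq_nonneg ϱ)
    linarith
  nlinarith [hEA_est, hEc_est, h5, e1, e2]
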